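/- Let n, d, k be natural numbers with d ≤ k ≤ n. Then |(1 - C(k,d)/C(n,d)) - (1 - (k/n)^d)| ≤ d²/n, where C(a,b) denotes the binomial coefficient. -/

import Mathlib

set_option maxHeartbeats 800000


theorem match_prob_approx (n d k : ℕ) (hdk : d ≤ k) (hkn : k ≤ n) :
    |(1 - (k.choose d : ℝ) / (n.choose d)) - (1 - ((k : ℝ) / n) ^ d)| ≤ (d : ℝ) ^ 2 / n := by
  have key : ∀ d : ℕ, d ≤ k →
      |(k.choose d : ℝ) / (n.choose d) - ((k : ℝ) / n) ^ d| ≤ (d : ℝ) ^ 2 / n := by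
    intro d
    induction d with
    | zero => intro _; simp
    | succ d ih =>
      intro hdk1
      have hdk : d ≤ k := Nat.le_of_succ_le hdk1
      have hdn1 : d + 1 ≤ n := le_trans hdk1 hkn
      have hdn : d ≤ n := Nat.le_of_succ_le hdn1
      have hn : (0 : ℝ) < n := by
        have : 0 < n := lt_of_lt_of_le (Nat.succ_pos d) hdn1
        exact_mod_cast this
      have hnd : (0 : ℝ) < (n : ℝ) - d := by
        have : (d : ℝ) < n := by exact_mod_cast hdn1
        linarith
      have hkd : (0 : ℝ) ≤ (k : ℝ) - d := by
        have : (d : ℝ) ≤ k := by exact_mod_cast hdk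
        linarith
      have hkn' : (k : ℝ) ≤ n := by exact_mod_cast hkn
      have hc1 : (0 : ℝ) < (n.choose d : ℝ) := by
        exact_mod_cast Nat.choose_pos hdn
      have hc2 : (0 : ℝ) < (n.choose (d + 1) : ℝ) := by
        exact_mod_cast Nat.choose_pos hdn1
      have h1 : (k.choose (d + 1) : ℝ) * (d + 1) = (k.choose d : ℝ) * ((k : ℝ) - d) := by
        have h := Nat.choose_succ_right_eq k d
        have h' := congrArg (Nat.cast : ℕ → ℝ) h
        push_cast [Nat.cast_sub hdk] at h'
        linarith
      have h2 : (n.choose (d + 1) : ℝ) * (d + 1) = (n.choose d : ℝ) * ((n : ℝ) - d) := by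
        have h := Nat.choose_succ_right_eq n d
        have h' := congrArg (Nat.cast : ℕ → ℝ) h
        push_cast [Nat.cast_sub hdn] at h'
        linarith
      have hd1 : ((d : ℝ) + 1) ≠ 0 := by positivity
      have h1' : (k.choose (d + 1) : ℝ) = (k.choose d : ℝ) * ((k : ℝ) - d) / ((d : ℝ) + 1) := by
        field_simp
        linarith [h1]
      have h2' : (n.choose (d + 1) : ℝ) = (n.choose d : ℝ) * ((n : ℝ) - d) / ((d : ℝ) + 1) := by
        field_simp
        linarith [h2]
      have hA : (k.choose (d + 1) : ℝ) / (n.choose (d + 1)) =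
          ((k.choose d : ℝ) / (n.choose d)) * (((k : ℝ) - d) / ((n : ℝ) - d)) := by
        rw [h1', h2']
        field_simp
      -- bounds
      have hAnn : (0 : ℝ) ≤ (k.choose d : ℝ) / (n.choose d) := by positivity
      have hAle : (k.choose d : ℝ) / (n.choose d) ≤ 1 := by
        rw [div_le_one hc1]
        exact_mod_cast Nat.choose_le_choose d hkn
      have hrnn : (0 : ℝ) ≤ ((k : ℝ) - d) / ((n : ℝ) - d) := by positivity
      have hrle : ((k : ℝ) - d) / ((n : ℝ) - d) ≤ 1 := by
        rw [div_le_one hnd]; linarith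
      have hpnn : (0 : ℝ) ≤ (k : ℝ) / n := by positivity
      have hple : (k : ℝ) / n ≤ 1 := by rw [div_le_one hn]; exact hkn'
      have hpd : ((k : ℝ) / n) ^ d ≤ 1 := pow_le_one₀ hpnn hple
      have hpdnn : (0 : ℝ) ≤ ((k : ℝ) / n) ^ d := by positivity
      have hrp : |((k : ℝ) - d) / ((n : ℝ) - d) - (k : ℝ) / n| ≤ (d : ℝ) / n := by
        have heq : ((k : ℝ) - d) / ((n : ℝ) - d) - (k : ℝ) / n =
            ((d : ℝ) * ((k : ℝ) - n)) / (((n : ℝ) - d) * n) := by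
          field_simp
          ring
        rw [heq, abs_div, abs_of_pos (mul_pos hnd hn),
          div_le_div_iff₀ (mul_pos hnd hn) hn]
        have habs : |(d : ℝ) * ((k : ℝ) - n)| = (d : ℝ) * ((n : ℝ) - k) := by
          rw [abs_mul, abs_of_nonneg (Nat.cast_nonneg d), abs_of_nonpos (by linarith)]
          ring
        rw [habs]
        nlinarith [mul_nonneg (mul_nonneg (Nat.cast_nonneg (α := ℝ) d) hn.le) hkd]
      have ihb := ih hdk
      rw [hA]
      have hsplit : (k.choose d : ℝ) / (n.choose d) * (((k : ℝ) - d) / ((n : ℝ) - d)) -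
          ((k : ℝ) / n) ^ (d + 1) =
          ((k.choose d : ℝ) / (n.choose d) - ((k : ℝ) / n) ^ d) * (((k : ℝ) - d) / ((n : ℝ) - d))
          + ((k : ℝ) / n) ^ d * (((k : ℝ) - d) / ((n : ℝ) - d) - (k : ℝ) / n) := by
        ring
      rw [hsplit]
      calc |((k.choose d : ℝ) / (n.choose d) - ((k : ℝ) / n) ^ d) * (((k : ℝ) - d) / ((n : ℝ) - d))
          + ((k : ℝ) / n) ^ d * (((k : ℝ) - d) / ((n : ℝ) - d) - (k : ℝ) / n)|
          ≤ |((k.choose d : ℝ) / (n.choose d) - ((k : ℝ) / n) ^ d)| *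
              |((k : ℝ) - d) / ((n : ℝ) - d)|
            + |((k : ℝ) / n) ^ d| * |(((k : ℝ) - d) / ((n : ℝ) - d) - (k : ℝ) / n)| := by
            calc _ ≤ _ := abs_add_le _ _
            _ = _ := by rw [abs_mul, abs_mul]
        _ ≤ ((d : ℝ) ^ 2 / n) * 1 + 1 * ((d : ℝ) / n) := by
            gcongr
            · rw [abs_of_nonneg hrnn]; exact hrle
            · rw [abs_of_nonneg hpdnn]; exact hpd
        _ ≤ ((d : ℕ) + 1 : ℝ) ^ 2 / n := by
            rw [mul_one, one_mul, ← add_div]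
            gcongr
            push_cast
            nlinarith [Nat.cast_nonneg (α := ℝ) d]
        _ = ((d + 1 : ℕ) : ℝ) ^ 2 / n := by push_cast; ring
  have hmain := key d hdk
  calc |(1 - (k.choose d : ℝ) / (n.choose d)) - (1 - ((k : ℝ) / n) ^ d)|
      = |(k.choose d : ℝ) / (n.choose d) - ((k : ℝ) / n) ^ d| := by
        rw [abs_sub_comm]; ring_nf
    _ ≤ (d : ℝ) ^ 2 / n := hmain
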